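/- Let λ : ℕ → ℝ be summable with λ(n) > 0 for all n, k : ℕ → ℝ with k(j) > 0, and ν(I) = (I!/|I|!)·λ(|I|)⁻¹·∏_j k(j)^(2·I(j)). Let a : (ℕ →₀ ℕ) → ℂ satisfy ∑'_I |a(I)|²·ν(I) < ∞, and suppose that for every u in the open unit ball of ℓ², ∑'_I a(I)·∏_j (k(j)·u(j))^(I(j)) = 0. Then a(I) = 0 for every multi-index I. -/

import Mathlib

open scoped BigOperators ENNReal NNReal

/-- The degree `|I| = ∑_j I j` of a multi-index. -/
noncomputable def mdeg (I : ℕ →₀ ℕ) : ℕ := I.sum fun _ n => n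

/-- The factorial `I! = ∏_j (I j)!` of a multi-index. -/
noncomputable def mfact (I : ℕ →₀ ℕ) : ℕ := I.prod fun _ n => n.factorial

/-- The weight `ν(I) = (I!/|I|!)·λ(|I|)⁻¹·∏_j k(j)^(2·I(j))`. -/
noncomputable def nuwt (lam : ℕ → ℝ) (k : ℕ → ℝ) (I : ℕ →₀ ℕ) : ℝ :=
  ((mfact I : ℝ) / (Nat.factorial (mdeg I) : ℝ)) * (lam (mdeg I))⁻¹ *
    ∏ j ∈ I.support, k j ^ (2 * I j)


lemma mfact_pos (I : ℕ →₀ ℕ) : 0 < mfact I :=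
  Finset.prod_pos fun _ _ => Nat.factorial_pos _

lemma nuwt_pos {lam k : ℕ → ℝ} (hlam : ∀ n, 0 < lam n) (hk : ∀ j, 0 < k j) (I : ℕ →₀ ℕ) :
    0 < nuwt lam k I :=
  mul_pos (mul_pos (div_pos (by exact_mod_cast mfact_pos I)
    (by exact_mod_cast (mdeg I).factorial_pos)) (inv_pos.2 (hlam _)))
    (Finset.prod_pos fun j _ => pow_pos (hk j) _)

lemma sum_finsuppAntidiag_eq {M : Type*} [AddCommMonoid M] (s : Finset ℕ) (n : ℕ)
    (F : (ℕ → ℕ) → M) :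
    ∑ I ∈ Finset.finsuppAntidiag s n, F ⇑I = ∑ f ∈ Finset.piAntidiag s n, F f := by
  classical
  rw [Finset.finsuppAntidiag, Finset.sum_map,
    ← Finset.sum_attach (Finset.piAntidiag s n) fun f => F f]
  exact Finset.sum_congr rfl fun x _ => rfl

lemma multinomial_expansion {R : Type*} [CommSemiring R] (s : Finset ℕ) (x : ℕ → R) (n : ℕ) :
    (∑ j ∈ s, x j) ^ n =
      ∑ I ∈ Finset.finsuppAntidiag s n, (Nat.multinomial s ⇑I : R) * ∏ j ∈ s, x j ^ I j := by
  classical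
  rw [Finset.sum_pow_eq_sum_piAntidiag s x n]
  exact (sum_finsuppAntidiag_eq s n fun f => (Nat.multinomial s f : R) * ∏ j ∈ s, x j ^ f j).symm

lemma mem_S {N n : ℕ} {I : ℕ →₀ ℕ} (hI : I ∈ Finset.finsuppAntidiag (Finset.range N) n) :
    mdeg I = n ∧ I.support ⊆ Finset.range N := by
  obtain ⟨h1, h2⟩ := Finset.mem_finsuppAntidiag.1 hI
  refine ⟨?_, h2⟩
  rw [← h1, mdeg, Finsupp.sum]
  exact Finset.sum_subset h2 fun j _ hj => Finsupp.notMem_support_iff.1 hj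

lemma multinomial_cast_eq {N n : ℕ} {I : ℕ →₀ ℕ}
    (hI : I ∈ Finset.finsuppAntidiag (Finset.range N) n) :
    (Nat.multinomial (Finset.range N) ⇑I : ℝ) = (n.factorial : ℝ) / (mfact I : ℝ) := by
  obtain ⟨h1, h2⟩ := Finset.mem_finsuppAntidiag.1 hI
  have hm : (∏ j ∈ Finset.range N, (I j).factorial) = mfact I := by
    rw [mfact, Finsupp.prod]
    exact (Finset.prod_subset h2 fun j _ hj => by
      rw [Finsupp.notMem_support_iff.1 hj]; rfl).symm
  have hspec := Nat.multinomial_spec (Finset.range N) ⇑I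
  rw [hm, h1] at hspec
  have hmf : ((mfact I : ℝ)) ≠ 0 := by exact_mod_cast (mfact_pos I).ne'
  rw [eq_div_iff hmf]
  exact_mod_cast (mul_comm (mfact I) (Nat.multinomial (Finset.range N) ⇑I)) ▸ hspec

lemma amgm_aux {x c ν : ℝ} (hx : 0 ≤ x) (hc : 0 ≤ c) (hν : 0 < ν) :
    x * c ≤ (x ^ 2 * ν + c ^ 2 / ν) / 2 := by
  have h : c ^ 2 / ν = (c / ν) ^ 2 * ν := by field_simp
  have h2 : c / ν * ν = c := div_mul_cancel₀ c hν.ne'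
  nlinarith [sq_nonneg (x - c / ν), hν.le, sq_nonneg (x + c / ν)]

lemma sum_subtype_S {M : Type*} [AddCommMonoid M] (N n : ℕ) (f : (ℕ →₀ ℕ) → M) :
    ∑ c ∈ (Finset.finsuppAntidiag (Finset.range N) n).subtype (fun I => mdeg I = n),
        f c.1
      = ∑ I ∈ Finset.finsuppAntidiag (Finset.range N) n, f I := by
  classical
  rw [Finset.sum_subtype_eq_sum_filter,
    Finset.filter_true_of_mem fun I hI => (mem_S hI).1]

lemma fiber_zero {N n : ℕ} {M : Type*} [Zero M] {f : (ℕ →₀ ℕ) → M}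
    (hz : ∀ I : ℕ →₀ ℕ, ¬ I.support ⊆ Finset.range N → f I = 0)
    (c : {I : ℕ →₀ ℕ // mdeg I = n})
    (hc : c ∉ (Finset.finsuppAntidiag (Finset.range N) n).subtype (fun I => mdeg I = n)) :
    f c.1 = 0 := by
  classical
  by_contra hgc
  apply hc
  rw [Finset.mem_subtype, Finset.mem_finsuppAntidiag]
  have hsupp : c.1.support ⊆ Finset.range N := by
    by_contra hs; exact hgc (hz _ hs)
  refine ⟨?_, hsupp⟩
  have hmd : mdeg c.1 = (Finset.range N).sum ⇑(c.1) := by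
    rw [mdeg, Finsupp.sum]
    exact Finset.sum_subset hsupp fun j _ hj => Finsupp.notMem_support_iff.1 hj
  rw [← hmd]; exact c.2

lemma hasSum_partition {M : Type*} [AddCommMonoid M] [TopologicalSpace M] [ContinuousAdd M]
    [RegularSpace M] (N : ℕ) {g : (ℕ →₀ ℕ) → M} {σ : M} (hσ : HasSum g σ)
    (hz : ∀ I : ℕ →₀ ℕ, ¬ I.support ⊆ Finset.range N → g I = 0) :
    HasSum (fun n => ∑ I ∈ Finset.finsuppAntidiag (Finset.range N) n, g I) σ := by
  classical
  have he : HasSum (fun p : Σ n : ℕ, {I : ℕ →₀ ℕ // mdeg I = n} => g p.2.1) σ :=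
    (Equiv.sigmaFiberEquiv mdeg).hasSum_iff.mpr hσ
  refine he.sigma fun n => ?_
  have h := hasSum_sum_of_ne_finset_zero
    (s := (Finset.finsuppAntidiag (Finset.range N) n).subtype (fun I => mdeg I = n))
    (f := fun c : {I : ℕ →₀ ℕ // mdeg I = n} => g c.1) (L := SummationFilter.unconditional _) (fun c hc => fiber_zero hz c hc)
  rwa [sum_subtype_S] at h

lemma summable_partition' (N : ℕ) {f : (ℕ →₀ ℕ) → ℝ} (h0 : ∀ I, 0 ≤ f I)
    (hz : ∀ I : ℕ →₀ ℕ, ¬ I.support ⊆ Finset.range N → f I = 0)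
    (hs : Summable fun n => ∑ I ∈ Finset.finsuppAntidiag (Finset.range N) n, f I) :
    Summable f := by
  classical
  rw [← (Equiv.sigmaFiberEquiv mdeg).summable_iff]
  apply (summable_sigma_of_nonneg fun _ => h0 _).mpr
  constructor
  · intro n
    exact summable_of_ne_finset_zero (s :=
      (Finset.finsuppAntidiag (Finset.range N) n).subtype (fun I => mdeg I = n))
      (fun c hc => fiber_zero hz c hc)
  · refine hs.congr fun n => ?_
    show (_ : ℝ) = ∑' c : {I : ℕ →₀ ℕ // mdeg I = n}, f c.1
    rw [tsum_eq_sum (s :=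
      (Finset.finsuppAntidiag (Finset.range N) n).subtype (fun I => mdeg I = n))
      (fun c hc => fiber_zero hz c hc), sum_subtype_S]

lemma Qzero (lam : ℕ → ℝ) (hlam_sum : Summable lam) (hlam_pos : ∀ n, 0 < lam n)
    (k : ℕ → ℝ) (hk : ∀ j, 0 < k j)
    (a : (ℕ →₀ ℕ) → ℂ)
    (ha : Summable fun I => ‖a I‖ ^ 2 * nuwt lam k I)
    (hvanish : ∀ u : lp (fun _ : ℕ => ℂ) 2, u ∈ Metric.ball (0 : lp (fun _ : ℕ => ℂ) 2) 1 →
      ∑' I : ℕ →₀ ℕ, a I * ∏ j ∈ I.support, ((k j : ℂ) * u j) ^ I j = 0)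
    (N : ℕ) (v : ℕ → ℂ) (hv : ∀ j, N ≤ j → v j = 0) (n : ℕ) :
    ∑ I ∈ Finset.finsuppAntidiag (Finset.range N) n,
      a I * ∏ j ∈ I.support, ((k j : ℂ) * v j) ^ I j = 0 := by
  classical
  set Q : ℕ → ℂ := fun m => ∑ I ∈ Finset.finsuppAntidiag (Finset.range N) m,
    a I * ∏ j ∈ I.support, ((k j : ℂ) * v j) ^ I j with hQdef
  suffices hQ0 : ∀ m, Q m = 0 by exact hQ0 n
  set B : ℝ := ∑ j ∈ Finset.range N, ‖v j‖ with hB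
  set D : ℝ := ∑ j ∈ Finset.range N, ‖v j‖ ^ 2 with hD
  have hB0 : 0 ≤ B := Finset.sum_nonneg fun _ _ => norm_nonneg _
  have hD0 : 0 ≤ D := Finset.sum_nonneg fun _ _ => sq_nonneg _
  set δ : ℝ := min (B + 1)⁻¹ (D + 1)⁻¹ with hδdef
  have hδpos : 0 < δ := lt_min (inv_pos.2 (by linarith)) (inv_pos.2 (by linarith))
  have key : ∀ t : ℂ, ‖t‖ < δ →
      HasSum (fun m => t ^ m * Q m) 0 ∧ Summable (fun m => ‖Q m‖ * ‖t‖ ^ m) := by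
    intro t ht
    set w : ℕ → ℂ := fun j => t * v j with hw
    have hwz : ∀ j, N ≤ j → w j = 0 := fun j hj => by rw [hw]; simp [hv j hj]
    set U : lp (fun _ : ℕ => ℂ) 2 := ∑ j ∈ Finset.range N, lp.single 2 j (w j) with hU
    have hUcoord : ∀ j, (U : ∀ _ : ℕ, ℂ) j = w j := by
      intro j
      rw [hU, lp.coeFn_sum]
      rw [Finset.sum_apply]
      have : ∀ i ∈ Finset.range N, lp.single (E := fun _ : ℕ => ℂ) 2 i (w i) j
          = if j = i then w i else 0 := by
        intro i _
        rw [lp.single_apply]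
        split_ifs with h
        · subst h; simp
        · simp [h]
      rw [Finset.sum_congr rfl this, Finset.sum_ite_eq]
      by_cases hj : j ∈ Finset.range N
      · rw [if_pos hj]
      · rw [if_neg hj, hwz j (not_lt.1 fun hlt => hj (Finset.mem_range.2 hlt))]
    have hp2 : (0:ℝ) < (2 : ENNReal).toReal := by norm_num
    have hUnorm : ‖U‖ ≤ ‖t‖ * B := by
      rw [hU]
      refine (norm_sum_le _ _).trans ?_
      rw [hB, Finset.mul_sum]
      refine Finset.sum_le_sum fun j _ => ?_
      rw [lp.norm_single (by norm_num), hw]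
      simp
    have hUball : U ∈ Metric.ball (0 : lp (fun _ : ℕ => ℂ) 2) 1 := by
      rw [Metric.mem_ball, dist_zero_right]
      have h1 : ‖t‖ * B ≤ (B + 1)⁻¹ * B :=
        mul_le_mul_of_nonneg_right (le_of_lt (lt_of_lt_of_le ht (min_le_left _ _))) hB0
      have h2 : (B + 1)⁻¹ * B < 1 := by
        rw [inv_mul_lt_iff₀ (by linarith)]
        linarith
      exact lt_of_le_of_lt (hUnorm.trans h1) h2
    set c : (ℕ →₀ ℕ) → ℝ :=
      fun I => ∏ j ∈ I.support, (k j * ‖t * v j‖) ^ I j with hc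
    set d : (ℕ →₀ ℕ) → ℝ := fun I =>
      lam (mdeg I) * ((mdeg I).factorial / (mfact I : ℝ)) *
        ∏ j ∈ I.support, ‖t * v j‖ ^ (2 * I j) with hd
    have hc0 : ∀ I, 0 ≤ c I := fun I => Finset.prod_nonneg fun j _ =>
      pow_nonneg (mul_nonneg (hk j).le (norm_nonneg _)) _
    have hd0 : ∀ I, 0 ≤ d I := fun I => mul_nonneg (mul_nonneg (hlam_pos _).le
      (div_nonneg (Nat.cast_nonneg _) (Nat.cast_nonneg _)))
      (Finset.prod_nonneg fun _ _ => pow_nonneg (norm_nonneg _) _)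
    have hcd : ∀ I, c I ^ 2 / nuwt lam k I = d I := by
      intro I
      rw [hc, hd, nuwt]
      rw [← Finset.prod_pow]
      have hsq : ∀ j ∈ I.support, ((k j * ‖t * v j‖) ^ I j) ^ 2
          = k j ^ (2 * I j) * ‖t * v j‖ ^ (2 * I j) := by
        intro j _
        rw [← pow_mul, mul_pow, mul_comm (I j) 2]
      rw [Finset.prod_congr rfl hsq, Finset.prod_mul_distrib]
      have hkprod : (0:ℝ) < ∏ j ∈ I.support, k j ^ (2 * I j) :=
        Finset.prod_pos fun j _ => pow_pos (hk j) _
      have hfac : (0:ℝ) < ((mdeg I).factorial : ℝ) := by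
        exact_mod_cast (mdeg I).factorial_pos
      have hmf : (0:ℝ) < (mfact I : ℝ) := by exact_mod_cast mfact_pos I
      have hlamI := hlam_pos (mdeg I)
      field_simp
    -- the series terms
    set g : (ℕ →₀ ℕ) → ℂ := fun I => a I * ∏ j ∈ I.support, ((k j : ℂ) * w j) ^ I j with hg
    have hgz : ∀ I : ℕ →₀ ℕ, ¬ I.support ⊆ Finset.range N → g I = 0 := by
      intro I hI
      obtain ⟨j, hjs, hjN⟩ := Finset.not_subset.1 hI
      rw [hg]
      apply mul_eq_zero_of_right
      apply Finset.prod_eq_zero hjs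
      rw [hwz j (not_lt.1 fun hlt => hjN (Finset.mem_range.2 hlt)), mul_zero]
      exact zero_pow (Finsupp.mem_support_iff.1 hjs)
    have hnormg : ∀ I, ‖g I‖ = ‖a I‖ * c I := by
      intro I
      rw [hg, hc, norm_mul]
      congr 1
      rw [norm_prod]
      refine Finset.prod_congr rfl fun j _ => ?_
      rw [norm_pow, norm_mul, Complex.norm_real, Real.norm_of_nonneg (hk j).le,
        hw]
    -- summability of d
    have htD : ‖t‖ ^ 2 * D ≤ 1 := by
      have h1 : ‖t‖ ≤ (D + 1)⁻¹ := le_of_lt (lt_of_lt_of_le ht (min_le_right _ _))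
      have h3 : ‖t‖ * (D + 1) ≤ 1 := by
        calc ‖t‖ * (D + 1) ≤ (D + 1)⁻¹ * (D + 1) :=
          mul_le_mul_of_nonneg_right h1 (by linarith)
        _ = 1 := inv_mul_cancel₀ (by linarith)
      nlinarith [norm_nonneg t, hD0, mul_le_mul h3 h3 (by positivity) (by norm_num : (0:ℝ) ≤ 1)]
    have hdS : ∀ m, ∑ I ∈ Finset.finsuppAntidiag (Finset.range N) m, d I
        = lam m * (‖t‖ ^ 2 * D) ^ m := by
      intro m
      have hterm : ∀ I ∈ Finset.finsuppAntidiag (Finset.range N) m,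
          d I = lam m * ((Nat.multinomial (Finset.range N) ⇑I : ℝ) *
            ∏ j ∈ Finset.range N, (‖t * v j‖ ^ 2) ^ I j) := by
        intro I hI
        simp only [hd]
        rw [(mem_S hI).1, multinomial_cast_eq hI]
        rw [mul_assoc]
        congr 1
        congr 1
        rw [← Finset.prod_subset (mem_S hI).2 (fun j _ hj => by
          rw [Finsupp.notMem_support_iff.1 hj, pow_zero])]
        exact Finset.prod_congr rfl fun j _ => by rw [← pow_mul, mul_comm 2 (I j), pow_mul]
      rw [Finset.sum_congr rfl hterm, ← Finset.mul_sum]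
      congr 1
      have hexp := multinomial_expansion (Finset.range N)
        (fun j => ‖t * v j‖ ^ 2) m
      rw [← hexp]
      congr 1
      rw [hD, Finset.mul_sum]
      refine Finset.sum_congr rfl fun j _ => ?_
      rw [norm_mul, mul_pow]
    have hdsum : Summable d := by
      apply summable_partition' N hd0
      · intro I hI
        obtain ⟨j, hjs, hjN⟩ := Finset.not_subset.1 hI
        rw [hd]
        apply mul_eq_zero_of_right
        apply Finset.prod_eq_zero hjs
        rw [hv j (not_lt.1 fun hlt => hjN (Finset.mem_range.2 hlt)), mul_zero, norm_zero]
        exact zero_pow (by simpa using Finsupp.mem_support_iff.1 hjs)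
      · refine Summable.of_nonneg_of_le (fun m => ?_) (fun m => ?_) hlam_sum
        · rw [hdS m]; exact mul_nonneg (hlam_pos m).le (by positivity)
        · rw [hdS m]
          calc lam m * (‖t‖ ^ 2 * D) ^ m ≤ lam m * 1 := by
                refine mul_le_mul_of_nonneg_left ?_ (hlam_pos m).le
                exact pow_le_one₀ (by positivity) htD
          _ = lam m := mul_one _
    -- summability of g
    have hgnorm_sum : Summable fun I => ‖g I‖ := by
      refine Summable.of_nonneg_of_le (fun _ => norm_nonneg _) (fun I => ?_)
        ((ha.add hdsum).div_const 2)
      rw [hnormg I]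
      calc ‖a I‖ * c I ≤ (‖a I‖ ^ 2 * nuwt lam k I + c I ^ 2 / nuwt lam k I) / 2 :=
            amgm_aux (norm_nonneg _) (hc0 I) (nuwt_pos hlam_pos hk I)
      _ = (‖a I‖ ^ 2 * nuwt lam k I + d I) / 2 := by rw [hcd I]
    have hgsum : Summable g := hgnorm_sum.of_norm
    have hg0 : HasSum g 0 := by
      refine hgsum.hasSum_iff.mpr ?_
      have heq : (fun I : ℕ →₀ ℕ => a I * ∏ j ∈ I.support, ((k j : ℂ) * U j) ^ I j) = g := by
        funext I
        rw [hg]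
        congr 1
        exact Finset.prod_congr rfl fun j _ => by rw [hUcoord j]
      rw [show (∑' I, g I) = ∑' I : ℕ →₀ ℕ, a I * ∏ j ∈ I.support, ((k j : ℂ) * U j) ^ I j
        from by rw [heq]]
      exact hvanish U hUball
    have hSg : ∀ m, ∑ I ∈ Finset.finsuppAntidiag (Finset.range N) m, g I = t ^ m * Q m := by
      intro m
      rw [hQdef]
      dsimp only
      rw [Finset.mul_sum]
      refine Finset.sum_congr rfl fun I hI => ?_
      simp only [hg]
      have hprod : ∏ j ∈ I.support, ((k j : ℂ) * w j) ^ I j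
          = t ^ m * ∏ j ∈ I.support, ((k j : ℂ) * v j) ^ I j := by
        have hm : m = ∑ j ∈ I.support, I j := by
          rw [← (mem_S hI).1, mdeg, Finsupp.sum]
        rw [hm, ← Finset.prod_pow_eq_pow_sum, ← Finset.prod_mul_distrib]
        refine Finset.prod_congr rfl fun j _ => ?_
        rw [hw, ← mul_pow]
        ring_nf
      rw [hprod]
      ring
    constructor
    · have := hasSum_partition N hg0 hgz
      rwa [funext hSg] at this
    · have hns : HasSum (fun m => ∑ I ∈ Finset.finsuppAntidiag (Finset.range N) m, ‖g I‖)
          (∑' I, ‖g I‖) := hasSum_partition N hgnorm_sum.hasSum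
          (fun I hI => by rw [hgz I hI, norm_zero])
      refine Summable.of_nonneg_of_le (fun m => by positivity) (fun m => ?_) hns.summable
      calc ‖Q m‖ * ‖t‖ ^ m = ‖t ^ m * Q m‖ := by rw [norm_mul, norm_pow, mul_comm]
      _ = ‖∑ I ∈ Finset.finsuppAntidiag (Finset.range N) m, g I‖ := by rw [hSg m]
      _ ≤ ∑ I ∈ Finset.finsuppAntidiag (Finset.range N) m, ‖g I‖ := norm_sum_le _ _
  -- power series argument
  set p : FormalMultilinearSeries ℂ ℂ ℂ :=
    fun m => Q m • ContinuousMultilinearMap.mkPiAlgebraFin ℂ m ℂ with hp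
  have hpnorm : ∀ m, ‖p m‖ ≤ ‖Q m‖ := by
    intro m
    calc ‖p m‖ ≤ ‖Q m‖ * ‖ContinuousMultilinearMap.mkPiAlgebraFin ℂ m ℂ‖ :=
          ContinuousMultilinearMap.opNorm_smul_le _ _
    _ = ‖Q m‖ := by rw [ContinuousMultilinearMap.norm_mkPiAlgebraFin, mul_one]
  set r : ℝ := δ / 2 with hr
  have hr0 : 0 < r := by positivity
  have hrδ : r < δ := by rw [hr]; linarith
  set rn : NNReal := ⟨r, hr0.le⟩ with hrn
  have hrabs : ‖(r : ℂ)‖ = r := by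
    rw [Complex.norm_real, Real.norm_of_nonneg hr0.le]
  have hrrad : (rn : ℝ≥0∞) ≤ p.radius := by
    apply FormalMultilinearSeries.le_radius_of_summable
    have h2 := (key (r : ℂ) (by rw [hrabs]; exact hrδ)).2
    rw [hrabs] at h2
    refine Summable.of_nonneg_of_le (fun m => ?_) (fun m => ?_) h2
    · positivity
    · exact mul_le_mul_of_nonneg_right (hpnorm m) (by positivity)
  have hball : HasFPowerSeriesOnBall (0 : ℂ → ℂ) p 0 rn := by
    refine ⟨hrrad, by exact_mod_cast hr0, ?_⟩
    intro y hy
    have hy' : ‖y‖ < δ := by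
      rw [EMetric.mem_ball, edist_zero_right] at hy
      have h2 : ‖y‖₊ < rn := by exact_mod_cast hy
      have h3 : ‖y‖ < r := by rw [← coe_nnnorm]; exact_mod_cast h2
      linarith
    have hsum := (key y hy').1
    have : (fun m => (p m) fun _ => y) = fun m => y ^ m * Q m := by
      funext m
      rw [hp]
      dsimp only
      rw [ContinuousMultilinearMap.smul_apply, ContinuousMultilinearMap.mkPiAlgebraFin_apply]
      simp [List.prod_ofFn, mul_comm]
    rw [this]
    simpa using hsum
  have hat : HasFPowerSeriesAt (0 : ℂ → ℂ) p 0 := ⟨rn, hball⟩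
  intro m
  have h1 := hat.apply_eq_zero m 1
  rw [hp] at h1
  dsimp only at h1
  rw [ContinuousMultilinearMap.smul_apply, ContinuousMultilinearMap.mkPiAlgebraFin_apply] at h1
  simpa [List.prod_ofFn] using h1

theorem stmt14 (lam : ℕ → ℝ) (hlam_sum : Summable lam) (hlam_pos : ∀ n, 0 < lam n)
    (k : ℕ → ℝ) (hk : ∀ j, 0 < k j)
    (a : (ℕ →₀ ℕ) → ℂ)
    (ha : Summable fun I => ‖a I‖ ^ 2 * nuwt lam k I)
    (hvanish : ∀ u : lp (fun _ : ℕ => ℂ) 2, u ∈ Metric.ball (0 : lp (fun _ : ℕ => ℂ) 2) 1 →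
      ∑' I : ℕ →₀ ℕ, a I * ∏ j ∈ I.support, ((k j : ℂ) * u j) ^ I j = 0) :
    ∀ I : ℕ →₀ ℕ, a I = 0 := by
  classical
  intro I₀
  set N : ℕ := (I₀.support.sup id) + 1 with hN
  have hsupp : I₀.support ⊆ Finset.range N := fun j hj =>
    Finset.mem_range.2 (Nat.lt_succ_of_le (Finset.le_sup (f := id) hj))
  set n : ℕ := mdeg I₀ with hn
  set P : MvPolynomial ℕ ℂ := ∑ I ∈ Finset.finsuppAntidiag (Finset.range N) n,
    MvPolynomial.monomial I (a I * ∏ j ∈ I.support, (k j : ℂ) ^ I j) with hP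
  have hI₀mem : I₀ ∈ Finset.finsuppAntidiag (Finset.range N) n := by
    rw [Finset.mem_finsuppAntidiag]
    refine ⟨?_, hsupp⟩
    rw [hn, mdeg, Finsupp.sum]
    exact (Finset.sum_subset hsupp fun j _ hj => Finsupp.notMem_support_iff.1 hj).symm
  have hPeval : ∀ x : ℕ → ℂ, MvPolynomial.eval x P = 0 := by
    intro x
    set v : ℕ → ℂ := fun j => if j < N then x j else 0 with hv'
    have hv : ∀ j, N ≤ j → v j = 0 := fun j hj => if_neg (not_lt.2 hj)
    have h0 := Qzero lam hlam_sum hlam_pos k hk a ha hvanish N v hv n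
    rw [hP, map_sum, ← h0]
    refine Finset.sum_congr rfl fun I hI => ?_
    rw [MvPolynomial.eval_monomial, Finsupp.prod]
    have hsub := (mem_S hI).2
    have hterm : ∀ j ∈ I.support, (k j : ℂ) ^ I j * x j ^ I j = ((k j : ℂ) * v j) ^ I j := by
      intro j hj
      rw [hv']
      simp only [if_pos (Finset.mem_range.1 (hsub hj))]
      rw [mul_pow]
    rw [mul_assoc, ← Finset.prod_mul_distrib, Finset.prod_congr rfl hterm]
  have hP0 : P = 0 := MvPolynomial.funext fun x => by rw [hPeval x, map_zero]
  have hcoeff : MvPolynomial.coeff I₀ P = a I₀ * ∏ j ∈ I₀.support, (k j : ℂ) ^ I₀ j := by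
    rw [hP, MvPolynomial.coeff_sum]
    rw [Finset.sum_eq_single I₀]
    · rw [MvPolynomial.coeff_monomial, if_pos rfl]
    · intro I _ hne
      rw [MvPolynomial.coeff_monomial, if_neg hne]
    · intro h
      exact absurd hI₀mem h
  have hz : a I₀ * ∏ j ∈ I₀.support, (k j : ℂ) ^ I₀ j = 0 := by
    rw [← hcoeff, hP0, MvPolynomial.coeff_zero]
  have hprod : (∏ j ∈ I₀.support, (k j : ℂ) ^ I₀ j) ≠ 0 :=
    Finset.prod_ne_zero_iff.2 fun j _ => pow_ne_zero _ (by exact_mod_cast (hk j).ne')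
  exact (mul_eq_zero.1 hz).resolve_right hprod
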